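/- Let (Ω, 𝓕, P) be a probability space with a filtration 𝓕_1 ⊆ 𝓕_2 ⊆ … ⊆ 𝓕, let d, T be positive integers, and let γ > 0, r ≥ 0, b ≥ 0, G ≥ 0, λ ≥ 0 be real numbers. Let w_1, …, w_{T+1} ∈ ℝ^d be deterministic comparators with ‖w_t‖ ≤ r. Let θ_1, …, θ_{T+1} : Ω → ℝ^d be random iterates, g_1, …, g_T : Ω → ℝ^d be bounded 𝓕_t-measurable random vectors (g_t being 𝓕_t-measurable), and η_1, …, η_T : Ω → ℝ^d be square-integrable random vectors such that: θ_t is 𝓕_t-measurable and ‖θ_t‖ ≤ r almost surely for each t; θ_{t+1} = θ_t − γ·η_t almost surely for each 1 ≤ t ≤ T; ‖E[η_t | 𝓕_t] − g_t‖ ≤ b almost surely for each t; and E‖η_t‖² ≤ G + λ for each t. Then Σ_{t=1}^{T} E⟨g_t, θ_t − w_t⟩ ≤ 2·T·b·r + (2r²)/γ + (2r/γ)·Σ_{t=1}^{T} ‖w_t − w_{t+1}‖ + (T·γ·(G + λ))/2. -/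

import Mathlib

open MeasureTheory
open scoped RealInnerProductSpace

private lemma div_arith (γ r A dd s : ℝ) (hγ : γ ≠ 0) :
    (A + 4 * r * dd + γ ^ 2 * s) / (2 * γ)
      = A / (2 * γ) + (2 * r / γ) * dd + γ * s / 2 := by
  field_simp
  ring

private lemma sum_Icc_telescope (f : ℕ → ℝ) (T : ℕ) :
    ∑ t ∈ Finset.Icc 1 T, (f t - f (t + 1)) = f 1 - f (T + 1) := by
  induction T with
  | zero => simp
  | succ n ih =>
      rw [Finset.sum_Icc_succ_top (by omega : 1 ≤ n + 1), ih]; ring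

private lemma integrable_mul_bdd {Ω : Type*} {mΩ : MeasurableSpace Ω} {P : Measure Ω}
    {v u : Ω → ℝ} (hv : Integrable v P) (hu : AEStronglyMeasurable u P) {c : ℝ}
    (hc : ∀ᵐ ω ∂P, |u ω| ≤ c) : Integrable (fun ω => v ω * u ω) P := by
  refine Integrable.mono' (hv.norm.const_mul c) (hv.1.mul hu) ?_
  filter_upwards [hc] with ω h
  rw [norm_mul, mul_comm c]
  exact mul_le_mul_of_nonneg_left (by rwa [Real.norm_eq_abs]) (norm_nonneg _)

private lemma condexp_clm {α : Type*} {m m0 : MeasurableSpace α} (hm : m ≤ m0) {μ : Measure α}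
    [IsFiniteMeasure μ]
    {E F : Type*} [NormedAddCommGroup E] [NormedSpace ℝ E] [CompleteSpace E]
    [NormedAddCommGroup F] [NormedSpace ℝ F] [CompleteSpace F]
    (L : E →L[ℝ] F) {f : α → E} (hf : Integrable f μ) :
    (fun ω => L ((μ[f|m]) ω)) =ᵐ[μ] μ[fun ω => L (f ω)|m] := by
  refine ae_eq_condExp_of_forall_setIntegral_eq hm (L.integrable_comp hf)
    (fun s _ _ => (L.integrable_comp integrable_condExp).integrableOn)
    (fun s hs hμs => ?_) ?_
  · rw [L.integral_comp_comm integrable_condExp.integrableOn,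
      setIntegral_condExp hm hf hs, L.integral_comp_comm hf.integrableOn]
  · exact StronglyMeasurable.aestronglyMeasurable
      (L.continuous.comp_stronglyMeasurable stronglyMeasurable_condExp)

private lemma coord_abs_le_norm {d : ℕ} (x : EuclideanSpace ℝ (Fin d)) (i : Fin d) :
    |x i| ≤ ‖x‖ := by
  rw [EuclideanSpace.norm_eq]
  have h : |x i| ^ 2 ≤ ∑ j, ‖x j‖ ^ 2 := by
    have := Finset.single_le_sum (f := fun j => ‖x j‖ ^ 2)
      (fun j _ => sq_nonneg _) (Finset.mem_univ i)
    simpa [Real.norm_eq_abs, sq_abs] using this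
  calc |x i| = Real.sqrt (|x i| ^ 2) := (Real.sqrt_sq (abs_nonneg _)).symm
    _ ≤ Real.sqrt (∑ j, ‖x j‖ ^ 2) := Real.sqrt_le_sqrt h

private lemma integral_inner_condexp {Ω : Type*} {m mΩ : MeasurableSpace Ω}
    (hm : m ≤ mΩ) {P : Measure Ω} [IsProbabilityMeasure P]
    {d : ℕ} {η X : Ω → EuclideanSpace ℝ (Fin d)} (hη : MemLp η 2 P)
    (hX : StronglyMeasurable[m] X) {c : ℝ} (hXbd : ∀ᵐ ω ∂P, ‖X ω‖ ≤ c) :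
    ∫ ω, ⟪(P[η|m]) ω, X ω⟫ ∂P = ∫ ω, ⟪η ω, X ω⟫ ∂P := by
  have hηint : Integrable η P := hη.integrable one_le_two
  have hXae : AEStronglyMeasurable X P :=
    StronglyMeasurable.aestronglyMeasurable (μ := P) (hX.mono hm)
  have hcoordbd : ∀ i, ∀ᵐ ω ∂P, |X ω i| ≤ c := fun i =>
    hXbd.mono fun ω h => (coord_abs_le_norm _ i).trans h
  have hXi : ∀ i, StronglyMeasurable[m] fun ω => X ω i := fun i => by
    simpa [PiLp.proj_apply] using
      (EuclideanSpace.proj (𝕜 := ℝ) i).continuous.comp_stronglyMeasurable hX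
  have hXiae : ∀ i, AEStronglyMeasurable (fun ω => X ω i) P := fun i =>
    StronglyMeasurable.aestronglyMeasurable (μ := P) ((hXi i).mono hm)
  have hηi : ∀ i, Integrable (fun ω => η ω i) P := fun i => by
    simpa [Function.comp_def, PiLp.proj_apply] using
      ((EuclideanSpace.proj (𝕜 := ℝ) i).comp_memLp' hη).integrable one_le_two
  have hci : ∀ i, Integrable (fun ω => (P[η|m]) ω i) P := fun i => by
    simpa [PiLp.proj_apply] using
      (EuclideanSpace.proj (𝕜 := ℝ) i).integrable_comp
        (integrable_condExp (μ := P) (m := m) (f := η))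
  have key : ∀ i : Fin d, ∫ ω, (P[η|m]) ω i * X ω i ∂P = ∫ ω, η ω i * X ω i ∂P := by
    intro i
    have h1 : (fun ω => (P[η|m]) ω i) =ᵐ[P] P[fun ω => η ω i|m] := by
      simpa [PiLp.proj_apply] using
        condexp_clm (μ := P) hm (EuclideanSpace.proj (𝕜 := ℝ) i) hηint
    have hcbd : ∀ᵐ ω ∂P, ‖X ω i‖ ≤ c := by
      filter_upwards [hcoordbd i] with ω h using by rwa [Real.norm_eq_abs]
    have hpull := condExp_stronglyMeasurable_mul_of_bound hm (hXi i) (hηi i) c hcbd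
    have hXηint : Integrable (fun ω => X ω i * η ω i) P :=
      (integrable_mul_bdd (hηi i) (hXiae i) (hcoordbd i)).congr
        (Filter.Eventually.of_forall fun ω => mul_comm _ _)
    calc ∫ ω, (P[η|m]) ω i * X ω i ∂P
        = ∫ ω, X ω i * (P[fun ω => η ω i|m]) ω ∂P :=
          integral_congr_ae (h1.mono fun ω h => by dsimp only at h ⊢; rw [h, mul_comm])
      _ = ∫ ω, (P[(fun ω => X ω i) * (fun ω => η ω i)|m]) ω ∂P :=
          (integral_congr_ae hpull).symm
      _ = ∫ ω, X ω i * η ω i ∂P := integral_condExp hm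
      _ = ∫ ω, η ω i * X ω i ∂P := by
          refine integral_congr_ae (Filter.Eventually.of_forall fun ω => mul_comm _ _)
  have expand : ∀ (u : Ω → EuclideanSpace ℝ (Fin d)),
      (∀ i, Integrable (fun ω => u ω i * X ω i) P) →
      ∫ ω, ⟪u ω, X ω⟫ ∂P = ∑ i, ∫ ω, u ω i * X ω i ∂P := by
    intro u hu
    rw [← integral_finset_sum Finset.univ (fun i _ => hu i)]
    refine integral_congr_ae (Filter.Eventually.of_forall fun ω => ?_)
    simp [PiLp.inner_apply, RCLike.inner_apply]
    exact Finset.sum_congr rfl fun _ _ => mul_comm _ _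
  rw [expand _ (fun i => integrable_mul_bdd (hci i) (hXiae i) (hcoordbd i)),
    expand _ (fun i => integrable_mul_bdd (hηi i) (hXiae i) (hcoordbd i))]
  exact Finset.sum_congr rfl fun i _ => key i


private lemma ogd_step {Ω : Type*} {m mΩ : MeasurableSpace Ω} (hm : m ≤ mΩ)
    {P : Measure Ω} [IsProbabilityMeasure P] {d : ℕ}
    {γ r b G lam : ℝ} (hγ : 0 < γ) (hr : 0 ≤ r) (hb : 0 ≤ b)
    {wt wt1 : EuclideanSpace ℝ (Fin d)} (hwt : ‖wt‖ ≤ r) (hwt1 : ‖wt1‖ ≤ r)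
    {θt θt1 gt ηt : Ω → EuclideanSpace ℝ (Fin d)}
    (hθtm : StronglyMeasurable[m] θt)
    (hθtb : ∀ᵐ ω ∂P, ‖θt ω‖ ≤ r) (hθt1b : ∀ᵐ ω ∂P, ‖θt1 ω‖ ≤ r)
    (hθt1int2 : Integrable (fun ω => ‖θt1 ω - wt1‖ ^ 2) P)
    (hgm : StronglyMeasurable[m] gt) (hgb : ∃ C, ∀ ω, ‖gt ω‖ ≤ C)
    (hη : MemLp ηt 2 P)
    (hupd : ∀ᵐ ω ∂P, θt1 ω = θt ω - γ • ηt ω)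
    (hbias : ∀ᵐ ω ∂P, ‖(P[ηt|m]) ω - gt ω‖ ≤ b)
    (hsec : ∫ ω, ‖ηt ω‖ ^ 2 ∂P ≤ G + lam) :
    ∫ ω, ⟪gt ω, θt ω - wt⟫ ∂P ≤
      2 * b * r + ((∫ ω, ‖θt ω - wt‖ ^ 2 ∂P) - ∫ ω, ‖θt1 ω - wt1‖ ^ 2 ∂P) / (2 * γ)
        + (2 * r / γ) * ‖wt - wt1‖ + γ * (G + lam) / 2 := by
  have hXm : StronglyMeasurable[m] (fun ω => θt ω - wt) :=
    hθtm.sub stronglyMeasurable_const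
  have hXae : AEStronglyMeasurable (fun ω => θt ω - wt) P :=
    StronglyMeasurable.aestronglyMeasurable (μ := P) (hXm.mono hm)
  have hXbd : ∀ᵐ ω ∂P, ‖θt ω - wt‖ ≤ 2 * r := by
    filter_upwards [hθtb] with ω h
    calc ‖θt ω - wt‖ ≤ ‖θt ω‖ + ‖wt‖ := norm_sub_le _ _
      _ ≤ r + r := add_le_add h hwt
      _ = 2 * r := by ring
  have hXint2 : Integrable (fun ω => ‖θt ω - wt‖ ^ 2) P := by
    refine Integrable.mono' (integrable_const ((2 * r) ^ 2)) (hXae.norm.pow 2) ?_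
    filter_upwards [hXbd] with ω h
    rw [Real.norm_eq_abs, abs_of_nonneg (sq_nonneg _)]
    exact pow_le_pow_left₀ (norm_nonneg _) h 2
  have hη2int : Integrable (fun ω => ‖ηt ω‖ ^ 2) P := by
    have h := hη.integrable_norm_rpow two_ne_zero ENNReal.ofNat_ne_top
    have heq : ∀ ω, ‖ηt ω‖ ^ ((2 : ENNReal).toReal) = ‖ηt ω‖ ^ 2 := by
      intro ω
      rw [ENNReal.toReal_ofNat, show ((2 : ℝ)) = ((2 : ℕ) : ℝ) by norm_num,
        Real.rpow_natCast]
    exact h.congr (Filter.Eventually.of_forall heq)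
  have hηint : Integrable ηt P := hη.integrable one_le_two
  have hinner_η : Integrable (fun ω => ⟪ηt ω, θt ω - wt⟫) P := by
    refine Integrable.mono' (hηint.norm.const_mul (2 * r)) (hηint.1.inner hXae) ?_
    filter_upwards [hXbd] with ω h
    calc ‖⟪ηt ω, θt ω - wt⟫‖ ≤ ‖ηt ω‖ * ‖θt ω - wt‖ := norm_inner_le_norm _ _
      _ ≤ ‖ηt ω‖ * (2 * r) := mul_le_mul_of_nonneg_left h (norm_nonneg _)
      _ = 2 * r * ‖ηt ω‖ := by ring
  have hinner_g : Integrable (fun ω => ⟪gt ω, θt ω - wt⟫) P := by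
    obtain ⟨C, hC⟩ := hgb
    refine Integrable.mono' (integrable_const (C * (2 * r)))
      ((StronglyMeasurable.aestronglyMeasurable (μ := P) (hgm.mono hm)).inner hXae) ?_
    filter_upwards [hXbd] with ω h
    calc ‖⟪gt ω, θt ω - wt⟫‖ ≤ ‖gt ω‖ * ‖θt ω - wt‖ := norm_inner_le_norm _ _
      _ ≤ C * (2 * r) := by
          have h0 : (0:ℝ) ≤ ‖gt ω‖ := norm_nonneg _
          exact mul_le_mul (hC ω) h (norm_nonneg _) (h0.trans (hC ω))
  have hinner_h : Integrable (fun ω => ⟪(P[ηt|m]) ω, θt ω - wt⟫) P := by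
    refine Integrable.mono'
      ((integrable_condExp (μ := P) (m := m) (f := ηt)).norm.const_mul (2 * r))
      ((integrable_condExp (μ := P) (m := m) (f := ηt)).1.inner hXae) ?_
    filter_upwards [hXbd] with ω h
    calc ‖⟪(P[ηt|m]) ω, θt ω - wt⟫‖ ≤ ‖(P[ηt|m]) ω‖ * ‖θt ω - wt‖ :=
          norm_inner_le_norm _ _
      _ ≤ ‖(P[ηt|m]) ω‖ * (2 * r) := mul_le_mul_of_nonneg_left h (norm_nonneg _)
      _ = 2 * r * ‖(P[ηt|m]) ω‖ := by ring
  have hpull : ∫ ω, ⟪(P[ηt|m]) ω, θt ω - wt⟫ ∂P = ∫ ω, ⟪ηt ω, θt ω - wt⟫ ∂P :=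
    integral_inner_condexp hm hη hXm hXbd
  have stepA : ∫ ω, ⟪gt ω, θt ω - wt⟫ ∂P ≤ 2 * b * r + ∫ ω, ⟪ηt ω, θt ω - wt⟫ ∂P := by
    have hae : ∀ᵐ ω ∂P, ⟪gt ω, θt ω - wt⟫ ≤ 2 * b * r + ⟪(P[ηt|m]) ω, θt ω - wt⟫ := by
      filter_upwards [hbias, hXbd] with ω hω1 hω2
      have hsub : ⟪gt ω - (P[ηt|m]) ω, θt ω - wt⟫
          = ⟪gt ω, θt ω - wt⟫ - ⟪(P[ηt|m]) ω, θt ω - wt⟫ := inner_sub_left _ _ _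
      have hCS : ⟪gt ω - (P[ηt|m]) ω, θt ω - wt⟫
          ≤ ‖gt ω - (P[ηt|m]) ω‖ * ‖θt ω - wt‖ := real_inner_le_norm _ _
      have hnorm : ‖gt ω - (P[ηt|m]) ω‖ ≤ b := by rwa [norm_sub_rev]
      have hmul : ‖gt ω - (P[ηt|m]) ω‖ * ‖θt ω - wt‖ ≤ b * (2 * r) :=
        mul_le_mul hnorm hω2 (norm_nonneg _) hb
      linarith
    calc ∫ ω, ⟪gt ω, θt ω - wt⟫ ∂P
        ≤ ∫ ω, (2 * b * r + ⟪(P[ηt|m]) ω, θt ω - wt⟫) ∂P :=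
          integral_mono_ae hinner_g ((integrable_const _).add hinner_h) hae
      _ = 2 * b * r + ∫ ω, ⟪(P[ηt|m]) ω, θt ω - wt⟫ ∂P := by
          rw [integral_add (integrable_const _) hinner_h, integral_const,
            probReal_univ, one_smul]
      _ = 2 * b * r + ∫ ω, ⟪ηt ω, θt ω - wt⟫ ∂P := by rw [hpull]
  have haept : ∀ᵐ ω ∂P, 2 * γ * ⟪ηt ω, θt ω - wt⟫ ≤
      ‖θt ω - wt‖ ^ 2 - ‖θt1 ω - wt1‖ ^ 2 + 4 * r * ‖wt - wt1‖
        + γ ^ 2 * ‖ηt ω‖ ^ 2 := by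
    filter_upwards [hupd, hθt1b] with ω hu hB
    have e1 : ‖θt1 ω - wt‖ ^ 2
        = ‖θt ω - wt‖ ^ 2 - 2 * γ * ⟪ηt ω, θt ω - wt⟫ + γ ^ 2 * ‖ηt ω‖ ^ 2 := by
      have hrw : θt1 ω - wt = (θt ω - wt) - γ • ηt ω := by rw [hu]; abel
      rw [hrw, norm_sub_sq_real, real_inner_smul_right, norm_smul, mul_pow,
        Real.norm_eq_abs, sq_abs, real_inner_comm]
      ring
    have e2 : ‖θt1 ω - wt1‖ ^ 2 ≤ ‖θt1 ω - wt‖ ^ 2 + 4 * r * ‖wt - wt1‖ := by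
      have expand1 : ‖θt1 ω - wt1‖ ^ 2 = ‖θt1 ω‖ ^ 2
          - 2 * ⟪θt1 ω, wt1⟫ + ‖wt1‖ ^ 2 := norm_sub_sq_real _ _
      have expand2 : ‖θt1 ω - wt‖ ^ 2 = ‖θt1 ω‖ ^ 2
          - 2 * ⟪θt1 ω, wt⟫ + ‖wt‖ ^ 2 := norm_sub_sq_real _ _
      have hinner : ⟪θt1 ω, wt - wt1⟫ = ⟪θt1 ω, wt⟫ - ⟪θt1 ω, wt1⟫ :=
        inner_sub_right _ _ _
      have hCS : ⟪θt1 ω, wt - wt1⟫ ≤ ‖θt1 ω‖ * ‖wt - wt1‖ := real_inner_le_norm _ _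
      have hCS2 : ‖θt1 ω‖ * ‖wt - wt1‖ ≤ r * ‖wt - wt1‖ :=
        mul_le_mul_of_nonneg_right hB (norm_nonneg _)
      have hdiff : ‖wt1‖ - ‖wt‖ ≤ ‖wt - wt1‖ := by
        rw [norm_sub_rev]
        exact (abs_le.mp (abs_norm_sub_norm_le _ _)).2
      have hs1 : (‖wt1‖ - ‖wt‖) * (‖wt1‖ + ‖wt‖) ≤ ‖wt - wt1‖ * (‖wt1‖ + ‖wt‖) :=
        mul_le_mul_of_nonneg_right hdiff (by positivity)
      have hs2 : ‖wt - wt1‖ * (‖wt1‖ + ‖wt‖) ≤ ‖wt - wt1‖ * (2 * r) :=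
        mul_le_mul_of_nonneg_left (by linarith) (norm_nonneg _)
      nlinarith [hs1, hs2, hCS, hCS2, hinner, expand1, expand2]
    linarith [e1, e2]
  have hIa : Integrable (fun ω => ‖θt ω - wt‖ ^ 2 - ‖θt1 ω - wt1‖ ^ 2) P :=
    hXint2.sub hθt1int2
  have hIb : Integrable (fun ω => ‖θt ω - wt‖ ^ 2 - ‖θt1 ω - wt1‖ ^ 2
      + 4 * r * ‖wt - wt1‖) P := hIa.add (integrable_const _)
  have hIc : Integrable (fun ω => γ ^ 2 * ‖ηt ω‖ ^ 2) P := hη2int.const_mul (γ ^ 2)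
  have hIntRHS : Integrable (fun ω => ‖θt ω - wt‖ ^ 2 - ‖θt1 ω - wt1‖ ^ 2
      + 4 * r * ‖wt - wt1‖ + γ ^ 2 * ‖ηt ω‖ ^ 2) P := hIb.add hIc
  have hmono := integral_mono_ae (hinner_η.const_mul (2 * γ)) hIntRHS haept
  have hRHSval : ∫ ω, (‖θt ω - wt‖ ^ 2 - ‖θt1 ω - wt1‖ ^ 2
      + 4 * r * ‖wt - wt1‖ + γ ^ 2 * ‖ηt ω‖ ^ 2) ∂P
      = (∫ ω, ‖θt ω - wt‖ ^ 2 ∂P) - (∫ ω, ‖θt1 ω - wt1‖ ^ 2 ∂P)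
        + 4 * r * ‖wt - wt1‖ + γ ^ 2 * ∫ ω, ‖ηt ω‖ ^ 2 ∂P := by
    rw [integral_add hIb hIc, integral_add hIa (integrable_const _),
      integral_sub hXint2 hθt1int2, integral_const, 
      probReal_univ, one_smul, integral_const_mul]
  have hLHSval : ∫ ω, 2 * γ * ⟪ηt ω, θt ω - wt⟫ ∂P
      = 2 * γ * ∫ ω, ⟪ηt ω, θt ω - wt⟫ ∂P := integral_const_mul _ _
  have hB2 : 2 * γ * ∫ ω, ⟪ηt ω, θt ω - wt⟫ ∂P ≤
      (∫ ω, ‖θt ω - wt‖ ^ 2 ∂P) - (∫ ω, ‖θt1 ω - wt1‖ ^ 2 ∂P)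
        + 4 * r * ‖wt - wt1‖ + γ ^ 2 * (G + lam) := by
    rw [← hLHSval]
    refine hmono.trans ?_
    rw [hRHSval]
    have h := mul_le_mul_of_nonneg_left hsec (sq_nonneg γ)
    linarith
  have stepB : ∫ ω, ⟪ηt ω, θt ω - wt⟫ ∂P ≤
      ((∫ ω, ‖θt ω - wt‖ ^ 2 ∂P) - ∫ ω, ‖θt1 ω - wt1‖ ^ 2 ∂P) / (2 * γ)
        + (2 * r / γ) * ‖wt - wt1‖ + γ * (G + lam) / 2 := by
    have key : ∫ ω, ⟪ηt ω, θt ω - wt⟫ ∂P ≤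
        ((∫ ω, ‖θt ω - wt‖ ^ 2 ∂P) - (∫ ω, ‖θt1 ω - wt1‖ ^ 2 ∂P)
          + 4 * r * ‖wt - wt1‖ + γ ^ 2 * (G + lam)) / (2 * γ) := by
      rw [le_div_iff₀ (by positivity)]
      linarith [hB2]
    exact key.trans_eq (div_arith γ r _ _ _ hγ.ne')
  linarith [stepA, stepB]

/-- Linearized (inner-product) form of the dynamic regret bound for online gradient
descent with noisy, biased gradient estimates: `Σ E⟪g t, θ t − w t⟫` is at most
`2Tbr + 2r²/γ + (2r/γ)·V + Tγ(G+λ)/2`. -/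
theorem ogd_dynamic_regret_linearized {Ω : Type*} {mΩ : MeasurableSpace Ω}
    (P : Measure Ω) [IsProbabilityMeasure P]
    (ℱ : Filtration ℕ mΩ)
    (d T : ℕ) (hd : 0 < d) (hT : 0 < T)
    (γ r b G lam : ℝ) (hγ : 0 < γ) (hr : 0 ≤ r) (hb : 0 ≤ b) (hG : 0 ≤ G) (hlam : 0 ≤ lam)
    (w : ℕ → EuclideanSpace ℝ (Fin d))
    (hw : ∀ t, 1 ≤ t → t ≤ T + 1 → ‖w t‖ ≤ r)
    (θ g η : ℕ → Ω → EuclideanSpace ℝ (Fin d))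
    (hθmeas : ∀ t, 1 ≤ t → t ≤ T + 1 → StronglyMeasurable[ℱ t] (θ t))
    (hθbd : ∀ t, 1 ≤ t → t ≤ T + 1 → ∀ᵐ ω ∂P, ‖θ t ω‖ ≤ r)
    (hgmeas : ∀ t, 1 ≤ t → t ≤ T → StronglyMeasurable[ℱ t] (g t))
    (hgbd : ∀ t, 1 ≤ t → t ≤ T → ∃ C, ∀ ω, ‖g t ω‖ ≤ C)
    (hηL2 : ∀ t, 1 ≤ t → t ≤ T → MemLp (η t) 2 P)
    (hupd : ∀ t, 1 ≤ t → t ≤ T → ∀ᵐ ω ∂P, θ (t + 1) ω = θ t ω - γ • η t ω)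
    (hbias : ∀ t, 1 ≤ t → t ≤ T → ∀ᵐ ω ∂P, ‖(P[η t|ℱ t]) ω - g t ω‖ ≤ b)
    (hsecond : ∀ t, 1 ≤ t → t ≤ T → (∫ ω, ‖η t ω‖ ^ 2 ∂P) ≤ G + lam) :
    ∑ t ∈ Finset.Icc 1 T, (∫ ω, ⟪g t ω, θ t ω - w t⟫ ∂P) ≤
      2 * (T : ℝ) * b * r + 2 * r ^ 2 / γ
        + (2 * r / γ) * ∑ t ∈ Finset.Icc 1 T, ‖w t - w (t + 1)‖
        + (T : ℝ) * γ * (G + lam) / 2 := by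
  classical
  have hmle : ∀ t, ℱ t ≤ mΩ := fun t => ℱ.le t
  set F : ℕ → ℝ := fun s => ∫ ω, ‖θ s ω - w s‖ ^ 2 ∂P with hFdef
  have hXae : ∀ t, 1 ≤ t → t ≤ T + 1 → AEStronglyMeasurable (fun ω => θ t ω - w t) P :=
    fun t h1 h2 => StronglyMeasurable.aestronglyMeasurable (μ := P)
      (((hθmeas t h1 h2).sub stronglyMeasurable_const).mono (hmle t))
  have hXbd : ∀ t, 1 ≤ t → t ≤ T + 1 → ∀ᵐ ω ∂P, ‖θ t ω - w t‖ ≤ 2 * r := fun t h1 h2 => by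
    filter_upwards [hθbd t h1 h2] with ω h
    calc ‖θ t ω - w t‖ ≤ ‖θ t ω‖ + ‖w t‖ := norm_sub_le _ _
      _ ≤ r + r := add_le_add h (hw t h1 h2)
      _ = 2 * r := by ring
  have hXint2 : ∀ t, 1 ≤ t → t ≤ T + 1 →
      Integrable (fun ω => ‖θ t ω - w t‖ ^ 2) P := by
    intro t h1 h2
    refine Integrable.mono' (integrable_const ((2 * r) ^ 2)) ((hXae t h1 h2).norm.pow 2) ?_
    filter_upwards [hXbd t h1 h2] with ω h
    rw [Real.norm_eq_abs, abs_of_nonneg (sq_nonneg _)]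
    exact pow_le_pow_left₀ (norm_nonneg _) h 2
  have hstep : ∀ t ∈ Finset.Icc 1 T, ∫ ω, ⟪g t ω, θ t ω - w t⟫ ∂P ≤
      2 * b * r + (F t - F (t + 1)) / (2 * γ)
        + (2 * r / γ) * ‖w t - w (t + 1)‖ + γ * (G + lam) / 2 := by
    intro t ht
    obtain ⟨h1, h2⟩ := Finset.mem_Icc.mp ht
    exact ogd_step (hmle t) hγ hr hb (hw t h1 (by omega)) (hw (t + 1) (by omega) (by omega))
      (hθmeas t h1 (by omega)) (hθbd t h1 (by omega)) (hθbd (t + 1) (by omega) (by omega))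
      (hXint2 (t + 1) (by omega) (by omega)) (hgmeas t h1 h2) (hgbd t h1 h2)
      (hηL2 t h1 h2) (hupd t h1 h2) (hbias t h1 h2) (hsecond t h1 h2)
  have hsum := Finset.sum_le_sum hstep
  have htel : ∑ t ∈ Finset.Icc 1 T, (F t - F (t + 1)) = F 1 - F (T + 1) :=
    sum_Icc_telescope F T
  have hFT1 : 0 ≤ F (T + 1) := integral_nonneg fun ω => sq_nonneg _
  have hF1 : F 1 ≤ (2 * r) ^ 2 := by
    have := integral_mono_ae (hXint2 1 le_rfl (by omega)) (integrable_const ((2 * r) ^ 2))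
      ((hXbd 1 le_rfl (by omega)).mono fun ω h => by
        exact pow_le_pow_left₀ (norm_nonneg _) h 2)
    simpa using this
  have hcard : (Finset.Icc 1 T).card = T := by
    rw [Nat.card_Icc]; omega
  have hexp : ∑ t ∈ Finset.Icc 1 T, (2 * b * r + (F t - F (t + 1)) / (2 * γ)
        + (2 * r / γ) * ‖w t - w (t + 1)‖ + γ * (G + lam) / 2)
      = (T : ℝ) * (2 * b * r) + (F 1 - F (T + 1)) / (2 * γ)
        + (2 * r / γ) * ∑ t ∈ Finset.Icc 1 T, ‖w t - w (t + 1)‖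
        + (T : ℝ) * (γ * (G + lam) / 2) := by
    rw [Finset.sum_add_distrib, Finset.sum_add_distrib, Finset.sum_add_distrib,
      Finset.sum_const, Finset.sum_const, hcard, ← Finset.sum_div, htel,
      ← Finset.mul_sum, nsmul_eq_mul, nsmul_eq_mul]
  have hdiv : (F 1 - F (T + 1)) / (2 * γ) ≤ 2 * r ^ 2 / γ := by
    have h1 : F 1 - F (T + 1) ≤ 4 * r ^ 2 := by
      have h4 : (2 * r) ^ 2 = 4 * r ^ 2 := by ring
      linarith
    calc (F 1 - F (T + 1)) / (2 * γ) ≤ (4 * r ^ 2) / (2 * γ) :=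
          (div_le_div_iff_of_pos_right (by positivity)).mpr h1
      _ = 2 * r ^ 2 / γ := by
          rw [div_eq_div_iff (by positivity) (by positivity)]
          ring
  calc ∑ t ∈ Finset.Icc 1 T, (∫ ω, ⟪g t ω, θ t ω - w t⟫ ∂P)
      ≤ (T : ℝ) * (2 * b * r) + (F 1 - F (T + 1)) / (2 * γ)
        + (2 * r / γ) * ∑ t ∈ Finset.Icc 1 T, ‖w t - w (t + 1)‖
        + (T : ℝ) * (γ * (G + lam) / 2) := by
        rw [← hexp]; exact hsum
    _ ≤ 2 * (T : ℝ) * b * r + 2 * r ^ 2 / γ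
        + (2 * r / γ) * ∑ t ∈ Finset.Icc 1 T, ‖w t - w (t + 1)‖
        + (T : ℝ) * γ * (G + lam) / 2 := by
        have h1 : (T : ℝ) * (2 * b * r) = 2 * (T : ℝ) * b * r := by ring
        have h2 : (T : ℝ) * (γ * (G + lam) / 2) = (T : ℝ) * γ * (G + lam) / 2 := by ring
        linarith [hdiv]
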